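/- Let k be a finite field of characteristic 2, and let h, f be polynomials over k. For any irreducible polynomial m over k, the following are equivalent: (a) m divides gcd(h, f′² + f·h′²); (b) there exists a polynomial l over k such that m divides h and m² divides f + h·l + l². -/
import Mathlib


open Polynomial

/-- Reformulation of singularity in characteristic 2 (Lemma `lem-reform`):
`m ∣ gcd(h, f′² + f h′²)` iff there is `l` with `m ∣ h` and `m² ∣ f + h l + l²`. -/
theorem dvd_gcd_iff_artinSchreier (k : Type*) [Field k] [Fintype k] [CharP k 2]
    [DecidableEq k] (h f : Polynomial k) (m : Polynomial k) (hm : Irreducible m) :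
    m ∣ EuclideanDomain.gcd h ((derivative f) ^ 2 + f * (derivative h) ^ 2) ↔
      ∃ l : Polynomial k, m ∣ h ∧ m ^ 2 ∣ f + h * l + l ^ 2 := by
  have two0k : (2 : k) = 0 := by
    have := CharP.cast_eq_zero k 2; simpa using this
  have C2 : (C (2 : k)) = 0 := by rw [two0k, map_zero]
  have two0 : (2 : Polynomial k) = 0 := by
    have := CharP.cast_eq_zero (Polynomial k) 2; simpa using this
  constructor
  · intro hdvd
    have hmh : m ∣ h := hdvd.trans (EuclideanDomain.gcd_dvd_left _ _)
    have hmd : m ∣ (derivative f) ^ 2 + f * (derivative h) ^ 2 :=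
      hdvd.trans (EuclideanDomain.gcd_dvd_right _ _)
    obtain ⟨h₁, hh1⟩ := hmh
    haveI : Fact (Irreducible m) := ⟨hm⟩
    haveI : Module.Finite k (AdjoinRoot m) := (AdjoinRoot.powerBasis hm.ne_zero).finite
    haveI : Finite (AdjoinRoot m) := Module.finite_of_finite k
    haveI : CharP (AdjoinRoot m) 2 :=
      charP_of_injective_algebraMap (algebraMap k (AdjoinRoot m)).injective 2
    haveI : ExpChar (AdjoinRoot m) 2 := .prime Nat.prime_two
    have two0' : (2 : AdjoinRoot m) = 0 := by
      have := CharP.cast_eq_zero (AdjoinRoot m) 2; simpa using this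
    -- find a square root `s` of `f` modulo `m`
    obtain ⟨a, ha⟩ := surjective_frobenius (AdjoinRoot m) 2 (AdjoinRoot.mk m f)
    obtain ⟨s, rfl⟩ := AdjoinRoot.mk_surjective a
    rw [frobenius_def, ← map_pow] at ha
    have hsq : m ∣ f + s ^ 2 := by
      rw [← AdjoinRoot.mk_eq_zero, map_add, ha]
      exact CharTwo.add_self_eq_zero _
    obtain ⟨t, ht⟩ := hsq
    have hf : f = m * t + s ^ 2 := by linear_combination ht - s ^ 2 * two0
    have hdf : derivative f = derivative m * t + m * derivative t := by
      rw [hf, derivative_add, derivative_mul, derivative_pow]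
      simp [C2]
    have hdh : derivative h = derivative m * h₁ + m * derivative h₁ := by
      rw [hh1, derivative_mul]
    set π := AdjoinRoot.mk m with hπ
    have hπm : π m = 0 := AdjoinRoot.mk_self
    have e1 : π (derivative f) = π (derivative m) * π t := by
      rw [hdf]; simp [map_add, map_mul, hπm]
    have e2 : π (derivative h) = π (derivative m) * π h₁ := by
      rw [hdh]; simp [map_add, map_mul, hπm]
    have e3 : π f = π s ^ 2 := by
      rw [hf]; simp [map_add, map_mul, map_pow, hπm]
    have key : π (derivative m) ^ 2 * π (t + s * h₁) ^ 2 = 0 := by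
      have h0 : π ((derivative f) ^ 2 + f * (derivative h) ^ 2) = 0 :=
        AdjoinRoot.mk_eq_zero.mpr hmd
      rw [map_add, map_mul, map_pow, map_pow, e1, e2, e3] at h0
      rw [map_add, map_mul]
      linear_combination h0 + (π (derivative m) ^ 2 * π t * π s * π h₁) * two0'
    -- `m` is separable, so `π (derivative m) ≠ 0`
    haveI : ExpChar k 2 := .prime Nat.prime_two
    haveI : PerfectField k := PerfectRing.toPerfectField k 2
    have hsep : IsCoprime m (derivative m) := PerfectField.separable_of_irreducible hm
    have hndvd : ¬ m ∣ derivative m := fun hd =>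
      hm.not_isUnit (hsep.isUnit_of_dvd' dvd_rfl hd)
    have hπm' : π (derivative m) ≠ 0 := fun h0 => hndvd (AdjoinRoot.mk_eq_zero.mp h0)
    have hz : π (t + s * h₁) = 0 := by
      rcases mul_eq_zero.mp key with h' | h'
      · exact absurd (pow_eq_zero_iff two_ne_zero |>.mp h') hπm'
      · exact pow_eq_zero_iff two_ne_zero |>.mp h'
    obtain ⟨c, hc⟩ := AdjoinRoot.mk_eq_zero.mp hz
    refine ⟨s, ⟨h₁, hh1⟩, ⟨c, ?_⟩⟩
    linear_combination hf + s * hh1 + m * hc + s ^ 2 * two0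
  · rintro ⟨l, ⟨h₁, hh1⟩, ⟨c, hc⟩⟩
    refine EuclideanDomain.dvd_gcd ⟨h₁, hh1⟩ ?_
    have hd := congrArg derivative hc
    simp only [derivative_add, derivative_mul, derivative_pow, Nat.cast_ofNat, pow_one,
      C2, zero_mul, mul_zero, add_zero, zero_add] at hd
    have d1 : derivative f + derivative h * l =
        m * (m * derivative c + h₁ * derivative l) := by
      linear_combination hd - derivative l * hh1 - m * derivative l * h₁ * two0
    have hdvd1 : m ∣ derivative f + derivative h * l := ⟨_, d1⟩
    have hdvd2 : m ∣ f + h * l + l ^ 2 := (dvd_pow_self m two_ne_zero).trans ⟨c, hc⟩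
    have big : m ∣ (derivative f + derivative h * l) ^ 2
        + (derivative h) ^ 2 * (f + h * l + l ^ 2)
        - (derivative h) ^ 2 * h * l
        - 2 * (derivative f * derivative h * l + (derivative h) ^ 2 * l ^ 2) := by
      refine dvd_sub (dvd_sub (dvd_add (dvd_pow hdvd1 two_ne_zero)
        (Dvd.dvd.mul_left hdvd2 _)) ?_) ?_
      · exact ((show m ∣ h from ⟨h₁, hh1⟩).mul_left _).mul_right _
      · rw [two0]; simp
    have heq : (derivative f + derivative h * l) ^ 2
        + (derivative h) ^ 2 * (f + h * l + l ^ 2)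
        - (derivative h) ^ 2 * h * l
        - 2 * (derivative f * derivative h * l + (derivative h) ^ 2 * l ^ 2)
        = (derivative f) ^ 2 + f * (derivative h) ^ 2 := by ring
    rwa [heq] at big
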